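/- For h(x) = (y^T z − 1)^2/2 with x = (y,z) ∈ R^{2d}, λ > 0, and independent v, w ~ N(0, I_d), the one-step expected zeroth-order drift satisfies E[(h(x+λu) − h(x−λu))/(2λ) · v] = (y^T z − 1) z + λ^2 y and E[(h(x+λu) − h(x−λu))/(2λ) · w] = (y^T z − 1) y + λ^2 z, where u = (v, w). -/

import Mathlib

open MeasureTheory ProbabilityTheory

/-- The standard Gaussian measure on `ℝ^d`, with i.i.d. `N(0,1)` coordinates. -/
noncomputable def stdGaussian (d : ℕ) : Measure (Fin d → ℝ) :=
  Measure.pi fun _ => gaussianReal 0 1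

/-- The test function `h(y,z) = (yᵀz − 1)²/2` on `ℝ^d × ℝ^d`. -/
noncomputable def hFun {d : ℕ} (p : (Fin d → ℝ) × (Fin d → ℝ)) : ℝ :=
  (∑ i, p.1 i * p.2 i - 1) ^ 2 / 2

open Real
open scoped ENNReal NNReal

section ZoDriftAux

lemma integrable_pow_mul_exp (n : ℕ) :
    Integrable fun x : ℝ => x ^ n * rexp (-(1/2 : ℝ) * x ^ 2) := by
  have h : (-1 : ℝ) < (n : ℝ) :=
    lt_of_lt_of_le neg_one_lt_zero (Nat.cast_nonneg n)
  simpa [Real.rpow_natCast] using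
    integrable_rpow_mul_exp_neg_mul_sq (b := (1/2:ℝ)) (by norm_num) h

lemma gaussianPDFReal_one (x : ℝ) :
    gaussianPDFReal 0 1 x = (Real.sqrt (2*π))⁻¹ * rexp (-(1/2 : ℝ) * x ^ 2) := by
  unfold gaussianPDFReal
  simp only [NNReal.coe_one, mul_one, sub_zero]
  congr 1
  ring_nf

lemma gauss_integral_eq (g : ℝ → ℝ) :
    ∫ x, g x ∂gaussianReal 0 1 = ∫ x, gaussianPDFReal 0 1 x * g x := by
  rw [gaussianReal_of_var_ne_zero 0 one_ne_zero]
  have hd : Measure.withDensity volume (gaussianPDF 0 1)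
      = Measure.withDensity volume (fun x => (((gaussianPDFReal 0 1 x).toNNReal : ℝ≥0) : ℝ≥0∞)) := rfl
  rw [hd, integral_withDensity_eq_integral_smul
    ((measurable_gaussianPDFReal 0 1).real_toNNReal) g]
  congr 1
  funext x
  rw [NNReal.smul_def, smul_eq_mul, Real.coe_toNNReal _ (gaussianPDFReal_nonneg 0 1 x)]

lemma gauss_integrable_iff (g : ℝ → ℝ) :
    Integrable g (gaussianReal 0 1) ↔ Integrable (fun x => gaussianPDFReal 0 1 x * g x) volume := by
  rw [gaussianReal_of_var_ne_zero 0 one_ne_zero]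
  have hd : Measure.withDensity volume (gaussianPDF 0 1)
      = Measure.withDensity volume (fun x => (((gaussianPDFReal 0 1 x).toNNReal : ℝ≥0) : ℝ≥0∞)) := rfl
  rw [hd, integrable_withDensity_iff_integrable_smul
    ((measurable_gaussianPDFReal 0 1).real_toNNReal)]
  constructor <;> intro h <;> refine h.congr (Filter.Eventually.of_forall fun x => ?_) <;>
    simp only [NNReal.smul_def, smul_eq_mul, Real.coe_toNNReal _ (gaussianPDFReal_nonneg 0 1 x)]

lemma integrable_pow_gauss (n : ℕ) : Integrable (fun x => x ^ n) (gaussianReal 0 1) := by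
  rw [gauss_integrable_iff]
  have := (integrable_pow_mul_exp n).const_mul (Real.sqrt (2*π))⁻¹
  refine this.congr (Filter.Eventually.of_forall fun x => ?_)
  simp only [gaussianPDFReal_one]
  ring

lemma int_exp_odd (n : ℕ) (hn : Odd n) :
    ∫ x : ℝ, x ^ n * rexp (-(1/2 : ℝ) * x ^ 2) = 0 := by
  have h := integral_neg_eq_self (fun x : ℝ => x ^ n * rexp (-(1/2 : ℝ) * x ^ 2)) volume
  have h2 : ∀ x : ℝ, (-x) ^ n * rexp (-(1/2 : ℝ) * (-x) ^ 2)
      = -(x ^ n * rexp (-(1/2 : ℝ) * x ^ 2)) := by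
    intro x; rw [hn.neg_pow, neg_sq]; ring
  simp only [h2, integral_neg] at h
  linarith

lemma int_exp_base : ∫ x : ℝ, rexp (-(1/2 : ℝ) * x ^ 2) = Real.sqrt (2*π) := by
  have h := integral_gaussian (1/2)
  rw [show π / (1/2 : ℝ) = 2*π by ring] at h
  simpa using h

lemma int_sq_exp : ∫ x : ℝ, x ^ 2 * rexp (-(1/2 : ℝ) * x ^ 2) = Real.sqrt (2*π) := by
  have hg : ∀ x : ℝ, HasDerivAt (fun t : ℝ => t * rexp (-(1/2 : ℝ) * t ^ 2))
      ((1 - x ^ 2) * rexp (-(1/2 : ℝ) * x ^ 2)) x := by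
    intro x
    have h1 : HasDerivAt (fun t : ℝ => -(1/2 : ℝ) * t ^ 2) (-(1/2 : ℝ) * (2 * x ^ 1)) x :=
      (hasDerivAt_pow 2 x).const_mul _
    have h3 := (hasDerivAt_id' x).mul h1.exp
    exact h3.congr_deriv (by ring)
  have he : Integrable (fun x : ℝ => rexp (-(1/2 : ℝ) * x ^ 2)) := by
    simpa using integrable_pow_mul_exp 0
  have hx2 : Integrable (fun x : ℝ => x ^ 2 * rexp (-(1/2 : ℝ) * x ^ 2)) :=
    integrable_pow_mul_exp 2
  have hint : Integrable (fun x : ℝ => (1 - x ^ 2) * rexp (-(1/2 : ℝ) * x ^ 2)) := by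
    have h := he.sub hx2
    refine h.congr (Filter.Eventually.of_forall fun x => ?_)
    simp only [Pi.sub_apply]
    ring
  have hf : Integrable (fun x : ℝ => x * rexp (-(1/2 : ℝ) * x ^ 2)) := by
    simpa using integrable_pow_mul_exp 1
  have h0 := integral_eq_zero_of_hasDerivAt_of_integrable hg hint hf
  have hrw : (fun x : ℝ => (1 - x ^ 2) * rexp (-(1/2 : ℝ) * x ^ 2))
      = fun x => rexp (-(1/2 : ℝ) * x ^ 2) - x ^ 2 * rexp (-(1/2 : ℝ) * x ^ 2) :=
    funext fun x => by ring
  rw [hrw, integral_sub he hx2] at h0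
  rw [int_exp_base] at h0
  linarith

lemma sqrt_two_pi_ne : Real.sqrt (2*π) ≠ 0 := by
  positivity

lemma gauss_moment (n : ℕ) :
    ∫ x, x ^ n ∂gaussianReal 0 1
      = (Real.sqrt (2*π))⁻¹ * ∫ x : ℝ, x ^ n * rexp (-(1/2 : ℝ) * x ^ 2) := by
  rw [gauss_integral_eq]
  have : (fun x => gaussianPDFReal 0 1 x * x ^ n)
      = fun x => (Real.sqrt (2*π))⁻¹ * (x ^ n * rexp (-(1/2 : ℝ) * x ^ 2)) :=
    funext fun x => by simp only [gaussianPDFReal_one]; ring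
  rw [this, MeasureTheory.integral_const_mul]

lemma gauss_moment_zero : ∫ x, x ^ 0 ∂gaussianReal 0 1 = 1 := by
  rw [gauss_moment]
  simp only [pow_zero, one_mul, int_exp_base]
  exact inv_mul_cancel₀ sqrt_two_pi_ne

lemma gauss_moment_one : ∫ x, x ^ 1 ∂gaussianReal 0 1 = 0 := by
  rw [gauss_moment, int_exp_odd 1 odd_one, mul_zero]

lemma gauss_moment_two : ∫ x, x ^ 2 ∂gaussianReal 0 1 = 1 := by
  rw [gauss_moment, int_sq_exp]
  exact inv_mul_cancel₀ sqrt_two_pi_ne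

lemma gauss_moment_three : ∫ x, x ^ 3 ∂gaussianReal 0 1 = 0 := by
  rw [gauss_moment, int_exp_odd 3 (by norm_num [Nat.odd_iff]), mul_zero]

def G : Type := ℝ
deriving instance MeasurableSpace for G
noncomputable instance : MeasureSpace G := ⟨gaussianReal 0 1⟩
instance : SigmaFinite (volume : Measure G) := by
  show SigmaFinite (gaussianReal 0 1); infer_instance

lemma std_eq (d : ℕ) : stdGaussian d = (volume : Measure (Fin d → G)) := by
  rw [volume_pi]; rfl

def Gr : G → ℝ := fun x => x

lemma std_int_pow (d : ℕ) (e : Fin d → ℕ) :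
    ∫ v, ∏ i, v i ^ e i ∂stdGaussian d = ∏ i, ∫ x, x ^ e i ∂gaussianReal 0 1 := by
  rw [std_eq]
  exact integral_fin_nat_prod_eq_prod (E := fun _ => G) (fun i x => Gr x ^ e i)


lemma std_integrable_pow (d : ℕ) (e : Fin d → ℕ) :
    Integrable (fun v => ∏ i, v i ^ e i) (stdGaussian d) := by
  rw [std_eq]
  exact Integrable.fin_nat_prod (E := fun _ => G) (f := fun i x => Gr x ^ e i)
    (fun i => integrable_pow_gauss (e i))

variable {d : ℕ}

lemma mono1 (v : Fin d → ℝ) (j : Fin d) :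
    ∏ i, v i ^ (if i = j then 1 else 0) = v j := by
  simp [pow_ite, Finset.prod_ite_eq']

lemma mono2 (v : Fin d → ℝ) (j k : Fin d) :
    ∏ i, v i ^ ((if i = j then 1 else 0) + (if i = k then 1 else 0)) = v j * v k := by
  rw [Finset.prod_congr rfl (fun i _ => pow_add (v i) _ _), Finset.prod_mul_distrib,
    mono1, mono1]

lemma mono3 (v : Fin d → ℝ) (j k l : Fin d) :
    ∏ i, v i ^ ((if i = j then 1 else 0) + (if i = k then 1 else 0) + (if i = l then 1 else 0))
      = v j * v k * v l := by
  rw [Finset.prod_congr rfl (fun i _ => pow_add (v i) _ _), Finset.prod_mul_distrib,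
    mono2, mono1]


lemma std_I1 (j : Fin d) : Integrable (fun v => v j) (stdGaussian d) := by
  simpa [mono1] using std_integrable_pow d (fun i => if i = j then 1 else 0)

lemma std_I2 (j k : Fin d) : Integrable (fun v => v j * v k) (stdGaussian d) := by
  simpa [mono2] using
    std_integrable_pow d (fun i => (if i = j then 1 else 0) + (if i = k then 1 else 0))

lemma std_I3 (j k l : Fin d) : Integrable (fun v => v j * v k * v l) (stdGaussian d) := by
  simpa [mono3] using std_integrable_pow d
    (fun i => (if i = j then 1 else 0) + (if i = k then 1 else 0) + (if i = l then 1 else 0))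

lemma std_S1 (j : Fin d) : ∫ v, v j ∂stdGaussian d = 0 := by
  have h := std_int_pow d (fun i => if i = j then 1 else 0)
  simp only [mono1] at h
  rw [h]
  refine Finset.prod_eq_zero (Finset.mem_univ j) ?_
  rw [if_pos rfl]
  exact gauss_moment_one

lemma std_S2 (j k : Fin d) :
    ∫ v, v j * v k ∂stdGaussian d = if j = k then 1 else 0 := by
  have h := std_int_pow d (fun i => (if i = j then 1 else 0) + (if i = k then 1 else 0))
  simp only [mono2] at h
  rw [h]
  by_cases hjk : j = k
  · subst hjk
    rw [if_pos rfl]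
    refine Finset.prod_eq_one (fun i _ => ?_)
    rcases eq_or_ne i j with hij | hij
    · subst hij
      simp only [if_pos rfl]
      exact gauss_moment_two
    · simp only [if_neg hij]
      exact gauss_moment_zero
  · rw [if_neg hjk]
    refine Finset.prod_eq_zero (Finset.mem_univ j) ?_
    rw [if_pos rfl, if_neg hjk]
    exact gauss_moment_one

lemma std_S3 (j k l : Fin d) : ∫ v, v j * v k * v l ∂stdGaussian d = 0 := by
  have h := std_int_pow d
    (fun i => (if i = j then 1 else 0) + (if i = k then 1 else 0) + (if i = l then 1 else 0))
  simp only [mono3] at h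
  rw [h]
  by_cases hjk : j = k
  · by_cases hjl : j = l
    · subst hjk; subst hjl
      refine Finset.prod_eq_zero (Finset.mem_univ j) ?_
      rw [if_pos rfl]
      exact gauss_moment_three
    · subst hjk
      refine Finset.prod_eq_zero (Finset.mem_univ l) ?_
      simp only [if_neg (Ne.symm hjl), if_pos rfl]
      exact gauss_moment_one
  · by_cases hjl : j = l
    · subst hjl
      refine Finset.prod_eq_zero (Finset.mem_univ k) ?_
      simp only [if_neg (Ne.symm hjk), if_pos rfl]
      exact gauss_moment_one
    · refine Finset.prod_eq_zero (Finset.mem_univ j) ?_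
      rw [if_pos rfl, if_neg hjk, if_neg hjl]
      exact gauss_moment_one

instance stdGaussian_prob (d : ℕ) : IsProbabilityMeasure (stdGaussian d) := by
  unfold _root_.stdGaussian; infer_instance


section Atoms
variable {d : ℕ}

lemma atom_vw (j k : Fin d) : ∫ p, p.1 j * p.2 k ∂((stdGaussian d).prod (stdGaussian d)) = 0 := by
  have h := integral_prod_mul (μ := stdGaussian d) (ν := stdGaussian d)
    (f := fun v => v j) (g := fun w => w k)
  rw [h, std_S1, zero_mul]

lemma atom_vv (j k : Fin d) : ∫ p, p.1 j * p.1 k ∂((stdGaussian d).prod (stdGaussian d)) = if j = k then 1 else 0 := by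
  have h := integral_prod_mul (μ := stdGaussian d) (ν := stdGaussian d)
    (f := fun v => v j * v k) (g := fun _ => (1 : ℝ))
  simp only [mul_one] at h
  rw [h, std_S2, integral_const]
  simp

lemma atom_ww (j k : Fin d) : ∫ p, p.2 j * p.2 k ∂((stdGaussian d).prod (stdGaussian d)) = if j = k then 1 else 0 := by
  have h := integral_prod_mul (μ := stdGaussian d) (ν := stdGaussian d)
    (f := fun _ => (1 : ℝ)) (g := fun w => w j * w k)
  simp only [one_mul] at h
  rw [h, std_S2, integral_const]
  simp

lemma atom_vvww (j k l m : Fin d) :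
    ∫ p, (p.1 j * p.1 k) * (p.2 l * p.2 m) ∂((stdGaussian d).prod (stdGaussian d))
      = (if j = k then 1 else 0) * (if l = m then 1 else 0) := by
  have h := integral_prod_mul (μ := stdGaussian d) (ν := stdGaussian d)
    (f := fun v => v j * v k) (g := fun w => w l * w m)
  rw [h, std_S2, std_S2]

lemma atom_vvvw (j k l m : Fin d) :
    ∫ p, (p.1 j * p.1 k * p.1 l) * p.2 m ∂((stdGaussian d).prod (stdGaussian d)) = 0 := by
  have h := integral_prod_mul (μ := stdGaussian d) (ν := stdGaussian d)
    (f := fun v => v j * v k * v l) (g := fun w => w m)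
  rw [h, std_S3, zero_mul]

lemma atom_vwww (j k l m : Fin d) :
    ∫ p, p.1 j * (p.2 k * p.2 l * p.2 m) ∂((stdGaussian d).prod (stdGaussian d)) = 0 := by
  have h := integral_prod_mul (μ := stdGaussian d) (ν := stdGaussian d)
    (f := fun v => v j) (g := fun w => w k * w l * w m)
  rw [h, std_S1, zero_mul]

lemma iatom_vw (j k : Fin d) : Integrable (fun p => p.1 j * p.2 k) ((stdGaussian d).prod (stdGaussian d)) :=
  (std_I1 j).mul_prod (std_I1 k)

lemma iatom_vv (j k : Fin d) : Integrable (fun p => p.1 j * p.1 k) ((stdGaussian d).prod (stdGaussian d)) := by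
  simpa using (std_I2 j k).mul_prod (integrable_const (1 : ℝ))

lemma iatom_ww (j k : Fin d) : Integrable (fun p => p.2 j * p.2 k) ((stdGaussian d).prod (stdGaussian d)) := by
  simpa using (integrable_const (1 : ℝ)).mul_prod (std_I2 j k)

lemma iatom_vvww (j k l m : Fin d) :
    Integrable (fun p => (p.1 j * p.1 k) * (p.2 l * p.2 m)) ((stdGaussian d).prod (stdGaussian d)) :=
  (std_I2 j k).mul_prod (std_I2 l m)

lemma iatom_vvvw (j k l m : Fin d) :
    Integrable (fun p => (p.1 j * p.1 k * p.1 l) * p.2 m) ((stdGaussian d).prod (stdGaussian d)) :=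
  (std_I3 j k l).mul_prod (std_I1 m)

lemma iatom_vwww (j k l m : Fin d) :
    Integrable (fun p => p.1 j * (p.2 k * p.2 l * p.2 m)) ((stdGaussian d).prod (stdGaussian d)) :=
  (std_I1 j).mul_prod (std_I3 k l m)

end Atoms

section Main
variable {d : ℕ}

lemma sum_expand (y z v w : Fin d → ℝ) (s : ℝ) :
    ∑ j, (y j + s * v j) * (z j + s * w j)
      = ∑ j, y j * z j + s * ∑ j, (y j * w j + z j * v j) + s ^ 2 * ∑ j, v j * w j := by
  rw [Finset.mul_sum, Finset.mul_sum, ← Finset.sum_add_distrib, ← Finset.sum_add_distrib]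
  exact Finset.sum_congr rfl fun j _ => by ring

lemma sum_expand_sub (y z v w : Fin d → ℝ) (s : ℝ) :
    ∑ j, (y j - s * v j) * (z j - s * w j)
      = ∑ j, y j * z j - s * ∑ j, (y j * w j + z j * v j) + s ^ 2 * ∑ j, v j * w j := by
  rw [Finset.mul_sum, Finset.mul_sum, ← Finset.sum_sub_distrib, ← Finset.sum_add_distrib]
  exact Finset.sum_congr rfl fun j _ => by ring

lemma decomp1 (lam : ℝ) (hlam : lam ≠ 0) (y z : Fin d → ℝ) (i : Fin d)
    (p : (Fin d → ℝ) × (Fin d → ℝ)) :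
    (hFun (y + lam • p.1, z + lam • p.2) - hFun (y - lam • p.1, z - lam • p.2)) / (2 * lam) * p.1 i
    = (∑ j, (((∑ j', y j' * z j' - 1) * y j) * (p.1 i * p.2 j)
           + ((∑ j', y j' * z j' - 1) * z j) * (p.1 j * p.1 i)))
      + ∑ j, ∑ k, ((lam ^ 2 * y j) * ((p.1 k * p.1 i) * (p.2 k * p.2 j))
                 + (lam ^ 2 * z j) * ((p.1 k * p.1 j * p.1 i) * p.2 k)) := by
  obtain ⟨v, w⟩ := p
  simp only [hFun, Pi.add_apply, Pi.sub_apply, Pi.smul_apply, smul_eq_mul]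
  rw [sum_expand y z v w lam, sum_expand_sub y z v w lam]
  have hc1 : (∑ j, (((∑ j', y j' * z j' - 1) * y j) * (v i * w j)
           + ((∑ j', y j' * z j' - 1) * z j) * (v j * v i)))
      = ((∑ j', y j' * z j' - 1) * v i) * ∑ j, (y j * w j + z j * v j) := by
    rw [Finset.mul_sum]
    exact Finset.sum_congr rfl fun j _ => by ring
  have hc2 : (∑ j, ∑ k, ((lam ^ 2 * y j) * ((v k * v i) * (w k * w j))
                 + (lam ^ 2 * z j) * ((v k * v j * v i) * w k)))
      = (lam ^ 2 * v i) * ((∑ j, (y j * w j + z j * v j)) * ∑ k, v k * w k) := by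
    calc ∑ j, ∑ k, ((lam ^ 2 * y j) * ((v k * v i) * (w k * w j))
                 + (lam ^ 2 * z j) * ((v k * v j * v i) * w k))
        = ∑ j, ((lam ^ 2 * v i) * ((y j * w j + z j * v j) * ∑ k, v k * w k)) := by
          refine Finset.sum_congr rfl fun j _ => ?_
          rw [Finset.mul_sum, Finset.mul_sum]
          exact Finset.sum_congr rfl fun k _ => by ring
      _ = (lam ^ 2 * v i) * ((∑ j, (y j * w j + z j * v j)) * ∑ k, v k * w k) := by
          rw [Finset.sum_mul, Finset.mul_sum]
  rw [hc1, hc2]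
  field_simp
  ring

lemma decomp2 (lam : ℝ) (hlam : lam ≠ 0) (y z : Fin d → ℝ) (i : Fin d)
    (p : (Fin d → ℝ) × (Fin d → ℝ)) :
    (hFun (y + lam • p.1, z + lam • p.2) - hFun (y - lam • p.1, z - lam • p.2)) / (2 * lam) * p.2 i
    = (∑ j, (((∑ j', y j' * z j' - 1) * y j) * (p.2 j * p.2 i)
           + ((∑ j', y j' * z j' - 1) * z j) * (p.1 j * p.2 i)))
      + ∑ j, ∑ k, ((lam ^ 2 * y j) * (p.1 k * (p.2 k * p.2 j * p.2 i))
                 + (lam ^ 2 * z j) * ((p.1 k * p.1 j) * (p.2 k * p.2 i))) := by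
  obtain ⟨v, w⟩ := p
  simp only [hFun, Pi.add_apply, Pi.sub_apply, Pi.smul_apply, smul_eq_mul]
  rw [sum_expand y z v w lam, sum_expand_sub y z v w lam]
  have hc1 : (∑ j, (((∑ j', y j' * z j' - 1) * y j) * (w j * w i)
           + ((∑ j', y j' * z j' - 1) * z j) * (v j * w i)))
      = ((∑ j', y j' * z j' - 1) * w i) * ∑ j, (y j * w j + z j * v j) := by
    rw [Finset.mul_sum]
    exact Finset.sum_congr rfl fun j _ => by ring
  have hc2 : (∑ j, ∑ k, ((lam ^ 2 * y j) * (v k * (w k * w j * w i))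
                 + (lam ^ 2 * z j) * ((v k * v j) * (w k * w i))))
      = (lam ^ 2 * w i) * ((∑ j, (y j * w j + z j * v j)) * ∑ k, v k * w k) := by
    calc ∑ j, ∑ k, ((lam ^ 2 * y j) * (v k * (w k * w j * w i))
                 + (lam ^ 2 * z j) * ((v k * v j) * (w k * w i)))
        = ∑ j, ((lam ^ 2 * w i) * ((y j * w j + z j * v j) * ∑ k, v k * w k)) := by
          refine Finset.sum_congr rfl fun j _ => ?_
          rw [Finset.mul_sum, Finset.mul_sum]
          exact Finset.sum_congr rfl fun k _ => by ring
      _ = (lam ^ 2 * w i) * ((∑ j, (y j * w j + z j * v j)) * ∑ k, v k * w k) := by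
          rw [Finset.sum_mul, Finset.mul_sum]
  rw [hc1, hc2]
  field_simp
  ring

lemma Hint1 (y z : Fin d → ℝ) (c : ℝ) (i : Fin d) :
    Integrable (fun p : (Fin d → ℝ) × (Fin d → ℝ) =>
      ∑ j, ((c * y j) * (p.1 i * p.2 j) + (c * z j) * (p.1 j * p.1 i)))
      ((stdGaussian d).prod (stdGaussian d)) :=
  integrable_finset_sum _ fun j _ =>
    ((iatom_vw i j).const_mul _).add ((iatom_vv j i).const_mul _)

lemma Hint2 (y z : Fin d → ℝ) (lam : ℝ) (i : Fin d) :
    Integrable (fun p : (Fin d → ℝ) × (Fin d → ℝ) =>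
      ∑ j, ∑ k, ((lam ^ 2 * y j) * ((p.1 k * p.1 i) * (p.2 k * p.2 j))
               + (lam ^ 2 * z j) * ((p.1 k * p.1 j * p.1 i) * p.2 k)))
      ((stdGaussian d).prod (stdGaussian d)) :=
  integrable_finset_sum _ fun j _ => integrable_finset_sum _ fun k _ =>
    ((iatom_vvww k i k j).const_mul _).add ((iatom_vvvw k j i k).const_mul _)

lemma Hint1' (y z : Fin d → ℝ) (c : ℝ) (i : Fin d) :
    Integrable (fun p : (Fin d → ℝ) × (Fin d → ℝ) =>
      ∑ j, ((c * y j) * (p.2 j * p.2 i) + (c * z j) * (p.1 j * p.2 i)))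
      ((stdGaussian d).prod (stdGaussian d)) :=
  integrable_finset_sum _ fun j _ =>
    ((iatom_ww j i).const_mul _).add ((iatom_vw j i).const_mul _)

lemma Hint2' (y z : Fin d → ℝ) (lam : ℝ) (i : Fin d) :
    Integrable (fun p : (Fin d → ℝ) × (Fin d → ℝ) =>
      ∑ j, ∑ k, ((lam ^ 2 * y j) * (p.1 k * (p.2 k * p.2 j * p.2 i))
               + (lam ^ 2 * z j) * ((p.1 k * p.1 j) * (p.2 k * p.2 i)))) 
      ((stdGaussian d).prod (stdGaussian d)) :=
  integrable_finset_sum _ fun j _ => integrable_finset_sum _ fun k _ =>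
    ((iatom_vwww k k j i).const_mul _).add ((iatom_vvww k j k i).const_mul _)

lemma Hval1 (y z : Fin d → ℝ) (c : ℝ) (i : Fin d) :
    ∫ p, (∑ j, ((c * y j) * (p.1 i * p.2 j) + (c * z j) * (p.1 j * p.1 i)))
        ∂((stdGaussian d).prod (stdGaussian d)) = c * z i := by
  trans (∑ j, ∫ p, ((c * y j) * (p.1 i * p.2 j) + (c * z j) * (p.1 j * p.1 i))
      ∂((stdGaussian d).prod (stdGaussian d)))
  · exact integral_finset_sum
      (f := fun j (p : (Fin d → ℝ) × (Fin d → ℝ)) =>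
        (c * y j) * (p.1 i * p.2 j) + (c * z j) * (p.1 j * p.1 i)) _
      fun j _ => ((iatom_vw i j).const_mul _).add ((iatom_vv j i).const_mul _)
  have hterm : ∀ j : Fin d,
      ∫ p, ((c * y j) * (p.1 i * p.2 j) + (c * z j) * (p.1 j * p.1 i))
        ∂((stdGaussian d).prod (stdGaussian d))
      = (c * z j) * (if j = i then 1 else 0) := by
    intro j
    rw [integral_add ((iatom_vw i j).const_mul _) ((iatom_vv j i).const_mul _),
      integral_const_mul, integral_const_mul, atom_vw, atom_vv, mul_zero, zero_add]
  rw [Finset.sum_congr rfl fun j _ => hterm j]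
  simp [mul_ite, Finset.sum_ite_eq']

lemma Hval2 (y z : Fin d → ℝ) (lam : ℝ) (i : Fin d) :
    ∫ p, (∑ j, ∑ k, ((lam ^ 2 * y j) * ((p.1 k * p.1 i) * (p.2 k * p.2 j))
               + (lam ^ 2 * z j) * ((p.1 k * p.1 j * p.1 i) * p.2 k)))
        ∂((stdGaussian d).prod (stdGaussian d)) = lam ^ 2 * y i := by
  trans (∑ j, ∫ p, (∑ k, ((lam ^ 2 * y j) * ((p.1 k * p.1 i) * (p.2 k * p.2 j))
               + (lam ^ 2 * z j) * ((p.1 k * p.1 j * p.1 i) * p.2 k)))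
      ∂((stdGaussian d).prod (stdGaussian d)))
  · exact integral_finset_sum
      (f := fun j (p : (Fin d → ℝ) × (Fin d → ℝ)) =>
        ∑ k, ((lam ^ 2 * y j) * ((p.1 k * p.1 i) * (p.2 k * p.2 j))
               + (lam ^ 2 * z j) * ((p.1 k * p.1 j * p.1 i) * p.2 k))) _
      fun j _ => integrable_finset_sum _ fun k _ =>
        ((iatom_vvww k i k j).const_mul _).add ((iatom_vvvw k j i k).const_mul _)
  have houter : ∀ j : Fin d,
      ∫ p, (∑ k, ((lam ^ 2 * y j) * ((p.1 k * p.1 i) * (p.2 k * p.2 j))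
               + (lam ^ 2 * z j) * ((p.1 k * p.1 j * p.1 i) * p.2 k)))
        ∂((stdGaussian d).prod (stdGaussian d))
      = ∑ k, (lam ^ 2 * y j) * ((if k = i then 1 else 0) * (if k = j then 1 else 0)) := by
    intro j
    trans (∑ k, ∫ p, ((lam ^ 2 * y j) * ((p.1 k * p.1 i) * (p.2 k * p.2 j))
               + (lam ^ 2 * z j) * ((p.1 k * p.1 j * p.1 i) * p.2 k))
        ∂((stdGaussian d).prod (stdGaussian d)))
    · exact integral_finset_sum
        (f := fun k (p : (Fin d → ℝ) × (Fin d → ℝ)) =>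
          (lam ^ 2 * y j) * ((p.1 k * p.1 i) * (p.2 k * p.2 j))
               + (lam ^ 2 * z j) * ((p.1 k * p.1 j * p.1 i) * p.2 k)) _
        fun k _ => ((iatom_vvww k i k j).const_mul _).add ((iatom_vvvw k j i k).const_mul _)
    refine Finset.sum_congr rfl fun k _ => ?_
    rw [integral_add ((iatom_vvww k i k j).const_mul _) ((iatom_vvvw k j i k).const_mul _),
      integral_const_mul, integral_const_mul, atom_vvww, atom_vvvw, mul_zero, add_zero]
  rw [Finset.sum_congr rfl fun j _ => houter j]
  simp [mul_ite, ite_mul, Finset.sum_ite_eq', Finset.sum_ite_eq]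

lemma Hval1' (y z : Fin d → ℝ) (c : ℝ) (i : Fin d) :
    ∫ p, (∑ j, ((c * y j) * (p.2 j * p.2 i) + (c * z j) * (p.1 j * p.2 i)))
        ∂((stdGaussian d).prod (stdGaussian d)) = c * y i := by
  trans (∑ j, ∫ p, ((c * y j) * (p.2 j * p.2 i) + (c * z j) * (p.1 j * p.2 i))
      ∂((stdGaussian d).prod (stdGaussian d)))
  · exact integral_finset_sum
      (f := fun j (p : (Fin d → ℝ) × (Fin d → ℝ)) =>
        (c * y j) * (p.2 j * p.2 i) + (c * z j) * (p.1 j * p.2 i)) _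
      fun j _ => ((iatom_ww j i).const_mul _).add ((iatom_vw j i).const_mul _)
  have hterm : ∀ j : Fin d,
      ∫ p, ((c * y j) * (p.2 j * p.2 i) + (c * z j) * (p.1 j * p.2 i))
        ∂((stdGaussian d).prod (stdGaussian d))
      = (c * y j) * (if j = i then 1 else 0) := by
    intro j
    rw [integral_add ((iatom_ww j i).const_mul _) ((iatom_vw j i).const_mul _),
      integral_const_mul, integral_const_mul, atom_ww, atom_vw, mul_zero, add_zero]
  rw [Finset.sum_congr rfl fun j _ => hterm j]
  simp [mul_ite, Finset.sum_ite_eq']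

lemma Hval2' (y z : Fin d → ℝ) (lam : ℝ) (i : Fin d) :
    ∫ p, (∑ j, ∑ k, ((lam ^ 2 * y j) * (p.1 k * (p.2 k * p.2 j * p.2 i))
               + (lam ^ 2 * z j) * ((p.1 k * p.1 j) * (p.2 k * p.2 i))))
        ∂((stdGaussian d).prod (stdGaussian d)) = lam ^ 2 * z i := by
  trans (∑ j, ∫ p, (∑ k, ((lam ^ 2 * y j) * (p.1 k * (p.2 k * p.2 j * p.2 i))
               + (lam ^ 2 * z j) * ((p.1 k * p.1 j) * (p.2 k * p.2 i))))
      ∂((stdGaussian d).prod (stdGaussian d)))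
  · exact integral_finset_sum
      (f := fun j (p : (Fin d → ℝ) × (Fin d → ℝ)) =>
        ∑ k, ((lam ^ 2 * y j) * (p.1 k * (p.2 k * p.2 j * p.2 i))
               + (lam ^ 2 * z j) * ((p.1 k * p.1 j) * (p.2 k * p.2 i)))) _
      fun j _ => integrable_finset_sum _ fun k _ =>
        ((iatom_vwww k k j i).const_mul _).add ((iatom_vvww k j k i).const_mul _)
  have houter : ∀ j : Fin d,
      ∫ p, (∑ k, ((lam ^ 2 * y j) * (p.1 k * (p.2 k * p.2 j * p.2 i))
               + (lam ^ 2 * z j) * ((p.1 k * p.1 j) * (p.2 k * p.2 i))))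
        ∂((stdGaussian d).prod (stdGaussian d))
      = ∑ k, (lam ^ 2 * z j) * ((if k = j then 1 else 0) * (if k = i then 1 else 0)) := by
    intro j
    trans (∑ k, ∫ p, ((lam ^ 2 * y j) * (p.1 k * (p.2 k * p.2 j * p.2 i))
               + (lam ^ 2 * z j) * ((p.1 k * p.1 j) * (p.2 k * p.2 i)))
        ∂((stdGaussian d).prod (stdGaussian d)))
    · exact integral_finset_sum
        (f := fun k (p : (Fin d → ℝ) × (Fin d → ℝ)) =>
          (lam ^ 2 * y j) * (p.1 k * (p.2 k * p.2 j * p.2 i))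
               + (lam ^ 2 * z j) * ((p.1 k * p.1 j) * (p.2 k * p.2 i))) _
        fun k _ => ((iatom_vwww k k j i).const_mul _).add ((iatom_vvww k j k i).const_mul _)
    refine Finset.sum_congr rfl fun k _ => ?_
    rw [integral_add ((iatom_vwww k k j i).const_mul _) ((iatom_vvww k j k i).const_mul _),
      integral_const_mul, integral_const_mul, atom_vwww, atom_vvww, mul_zero, zero_add]
  rw [Finset.sum_congr rfl fun j _ => houter j]
  simp [mul_ite, ite_mul, Finset.sum_ite_eq', Finset.sum_ite_eq]

end Main

end ZoDriftAux

/-- For `h(y,z) = (yᵀz−1)²/2`, `λ > 0`, and independent `v, w ~ N(0, I_d)`, the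
expected zeroth-order drift with `u = (v,w)` satisfies
`E[(h(x+λu) − h(x−λu))/(2λ) · v] = (yᵀz − 1) z + λ² y` and
`E[(h(x+λu) − h(x−λu))/(2λ) · w] = (yᵀz − 1) y + λ² z`, coordinatewise. -/
theorem zo_drift_on_hFun (d : ℕ) (lam : ℝ) (hlam : 0 < lam) (y z : Fin d → ℝ) :
    (∀ i : Fin d,
      ∫ p, (hFun (y + lam • p.1, z + lam • p.2) - hFun (y - lam • p.1, z - lam • p.2))
          / (2 * lam) * p.1 i ∂((stdGaussian d).prod (stdGaussian d))
        = (∑ j, y j * z j - 1) * z i + lam ^ 2 * y i) ∧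
    (∀ i : Fin d,
      ∫ p, (hFun (y + lam • p.1, z + lam • p.2) - hFun (y - lam • p.1, z - lam • p.2))
          / (2 * lam) * p.2 i ∂((stdGaussian d).prod (stdGaussian d))
        = (∑ j, y j * z j - 1) * y i + lam ^ 2 * z i) := by
  have hlam' : lam ≠ 0 := ne_of_gt hlam
  constructor
  · intro i
    have heq : (fun p : (Fin d → ℝ) × (Fin d → ℝ) =>
        (hFun (y + lam • p.1, z + lam • p.2) - hFun (y - lam • p.1, z - lam • p.2))
          / (2 * lam) * p.1 i)
        = fun p => (∑ j, (((∑ j', y j' * z j' - 1) * y j) * (p.1 i * p.2 j)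
           + ((∑ j', y j' * z j' - 1) * z j) * (p.1 j * p.1 i)))
      + ∑ j, ∑ k, ((lam ^ 2 * y j) * ((p.1 k * p.1 i) * (p.2 k * p.2 j))
                 + (lam ^ 2 * z j) * ((p.1 k * p.1 j * p.1 i) * p.2 k)) :=
      funext fun p => decomp1 lam hlam' y z i p
    rw [heq, integral_add (Hint1 y z _ i) (Hint2 y z lam i), Hval1, Hval2]
  · intro i
    have heq : (fun p : (Fin d → ℝ) × (Fin d → ℝ) =>
        (hFun (y + lam • p.1, z + lam • p.2) - hFun (y - lam • p.1, z - lam • p.2))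
          / (2 * lam) * p.2 i)
        = fun p => (∑ j, (((∑ j', y j' * z j' - 1) * y j) * (p.2 j * p.2 i)
           + ((∑ j', y j' * z j' - 1) * z j) * (p.1 j * p.2 i)))
      + ∑ j, ∑ k, ((lam ^ 2 * y j) * (p.1 k * (p.2 k * p.2 j * p.2 i))
                 + (lam ^ 2 * z j) * ((p.1 k * p.1 j) * (p.2 k * p.2 i))) :=
      funext fun p => decomp2 lam hlam' y z i p
    rw [heq, integral_add (Hint1' y z _ i) (Hint2' y z lam i), Hval1', Hval2']
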